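/- arXiv:1303.5925 — 3 statements merged into one kernel-verified Lean document; each statement's English description precedes it below -/
import Mathlib

section
/- Let g be a finite-dimensional real solvable Lie algebra and let k = [m,m] where g = m ⊕ h is the eigenspace decomposition of an involutive automorphism σ (m the (−1)-eigenspace, h the (+1)-eigenspace) and k ⊆ h. If k is contained in the nilradical of g, then for every X = X_k + X_m with X_k ∈ k and X_m ∈ m, the characteristic polynomial of ad(X) equals that of ad(X_m); in particular ad(X) has a purely imaginary nonzero eigenvalue only if ad(X_m) does. -/
open Set Submodule

section chain

variable {K V : Type*} [DivisionRing K] [AddCommGroup V] [Module K V]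

/-- An increasing chain of linearly independent sets adapted to a monotone chain of
submodules starting at `⊥`. -/
noncomputable def adaptedChain (G : ℕ → Submodule K V) (hG : Monotone G) (h0 : G 0 = ⊥) :
    ∀ j : ℕ, {s : Set V // s ⊆ (G j : Set V) ∧ (G j : Set V) ⊆ ↑(span K s) ∧
      LinearIndependent K (Subtype.val : s → V)}
  | 0 => ⟨∅, by simp [h0], by simp [h0, subset_def], linearIndependent_empty K V⟩
  | (j + 1) =>
      ⟨(exists_linearIndepOn_id_extension (adaptedChain G hG h0 j).2.2.2
          ((adaptedChain G hG h0 j).2.1.trans (hG (Nat.le_succ j)))).choose,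
        (exists_linearIndepOn_id_extension (adaptedChain G hG h0 j).2.2.2
          ((adaptedChain G hG h0 j).2.1.trans (hG (Nat.le_succ j)))).choose_spec.1,
        (exists_linearIndepOn_id_extension (adaptedChain G hG h0 j).2.2.2
          ((adaptedChain G hG h0 j).2.1.trans (hG (Nat.le_succ j)))).choose_spec.2.2.1,
        (exists_linearIndepOn_id_extension (adaptedChain G hG h0 j).2.2.2
          ((adaptedChain G hG h0 j).2.1.trans (hG (Nat.le_succ j)))).choose_spec.2.2.2⟩

lemma adaptedChain_mono (G : ℕ → Submodule K V) (hG : Monotone G) (h0 : G 0 = ⊥) (j : ℕ) :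
    (adaptedChain G hG h0 j : Set V) ⊆ (adaptedChain G hG h0 (j + 1) : Set V) := by
  rw [adaptedChain]
  exact (exists_linearIndepOn_id_extension (adaptedChain G hG h0 j).2.2.2
    ((adaptedChain G hG h0 j).2.1.trans (hG (Nat.le_succ j)))).choose_spec.2.1

end chain

theorem charpoly_eq_of_filtration {K V : Type*} [Field K] [AddCommGroup V] [Module K V]
    [Module.Finite K V] (A B : V →ₗ[K] V) (n : ℕ) (E : ℕ → Submodule K V)
    (hE0 : E 0 = ⊤) (hEn : E n = ⊥) (hmono : ∀ i, E (i + 1) ≤ E i)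
    (hA : ∀ i, ∀ x ∈ E i, A x ∈ E i) (hB : ∀ i, ∀ x ∈ E i, B x ∈ E i)
    (hAB : ∀ i, ∀ x ∈ E i, A x - B x ∈ E (i + 1)) :
    A.charpoly = B.charpoly := by
  classical
  have hEanti : Antitone E := antitone_nat_of_succ_le hmono
  set G : ℕ → Submodule K V := fun j => E (n - j) with hG
  have hGmono : Monotone G := fun a b hab => hEanti (Nat.sub_le_sub_left hab n)
  have hG0 : G 0 = ⊥ := by simp [hG, hEn]
  set T : ℕ → Set V := fun j => (adaptedChain G hGmono hG0 j : Set V) with hT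
  have key : ∀ j, T j ⊆ (G j : Set V) ∧ (G j : Set V) ⊆ ↑(span K (T j)) ∧
      LinearIndependent K (Subtype.val : T j → V) := fun j => (adaptedChain G hGmono hG0 j).2
  have hTmono' : Monotone T := monotone_nat_of_le_succ (adaptedChain_mono G hGmono hG0)
  have hspan : ∀ j, span K (T j) = G j := fun j =>
    le_antisymm (span_le.2 (key j).1) fun x hx => (key j).2.1 hx
  have hfintype : Fintype ↥(T n) := Set.Finite.fintype ((key n).2.2.setFinite)
  have hspanTop : ⊤ ≤ span K (Set.range (Subtype.val : T n → V)) := by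
    rw [Subtype.range_coe]
    intro x _
    exact (key n).2.1 (by simp [hG, hE0, Nat.sub_self] : x ∈ (G n : Set V))
  let bV : Module.Basis (T n) K V := Module.Basis.mk (key n).2.2 hspanTop
  -- level function
  let d : T n → ℕ := fun u => sInf {j | (u : V) ∈ T j}
  have hd_mem : ∀ u : T n, (u : V) ∈ T (d u) := fun u =>
    Nat.sInf_mem (⟨n, u.2⟩ : {j | (u : V) ∈ T j}.Nonempty)
  have hd_le : ∀ u : T n, ∀ j, (u : V) ∈ T j ↔ d u ≤ j := fun u j =>
    ⟨fun h => Nat.sInf_le h, fun h => hTmono' h (hd_mem u)⟩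
  have hd_top : ∀ u : T n, d u ≤ n := fun u => (hd_le u n).1 u.2
  have himage' : ∀ j, j ≤ n → ⇑bV '' {u | d u ≤ j} = T j := by
    intro j hj
    rw [show ⇑bV = (Subtype.val : T n → V) from Module.Basis.coe_mk _ _]
    ext x
    constructor
    · rintro ⟨u, hu, rfl⟩
      exact (hd_le u j).2 hu
    · intro hx
      exact ⟨⟨x, hTmono' hj hx⟩, (hd_le ⟨x, hTmono' hj hx⟩ j).1 hx, rfl⟩
  have hsupp : ∀ j, j ≤ n → ∀ x, x ∈ E (n - j) → ∀ u : T n, j < d u → bV.repr x u = 0 := by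
    intro j hj x hx u hu
    have hx' : x ∈ span K (⇑bV '' {u | d u ≤ j}) := by
      rw [himage' j hj, hspan j]; exact hx
    have hss : ↑(bV.repr x).support ⊆ {u | d u ≤ j} := (Module.Basis.mem_span_image (b := bV)).mp hx'
    by_contra h0
    have : d u ≤ j := hss (Finsupp.mem_support_iff.mpr h0)
    omega
  have hbV_mem : ∀ v : T n, (bV v : V) ∈ E (n - d v) := by
    intro v
    have : (bV v : V) ∈ G (d v) := by
      rw [show ⇑bV = (Subtype.val : T n → V) from Module.Basis.coe_mk _ _, ← hspan]
      exact subset_span (hd_mem v)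
    exact this
  let MA := LinearMap.toMatrix bV bV A
  let MB := LinearMap.toMatrix bV bV B
  have hMA : MA.BlockTriangular d := by
    intro u v huv
    rw [show MA u v = bV.repr (A (bV v)) u from LinearMap.toMatrix_apply _ _ _ _ _]
    exact hsupp (d v) (hd_top v) _ (hA _ _ (hbV_mem v)) u huv
  have hMB : MB.BlockTriangular d := by
    intro u v huv
    rw [show MB u v = bV.repr (B (bV v)) u from LinearMap.toMatrix_apply _ _ _ _ _]
    exact hsupp (d v) (hd_top v) _ (hB _ _ (hbV_mem v)) u huv
  have hblocks : ∀ a, MA.toSquareBlock d a = MB.toSquareBlock d a := by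
    intro a
    ext u v
    simp only [Matrix.toSquareBlock_def]
    have hsub : MA (↑u) (↑v) - MB (↑u) (↑v) = bV.repr (A (bV ↑v) - B (bV ↑v)) (↑u) := by
      simp [MA, MB, LinearMap.toMatrix_apply, map_sub]
    have hdu : d (↑u : T n) = a := u.2
    have hdv : d (↑v : T n) = a := v.2
    have hmem : A (bV ↑v) - B (bV ↑v) ∈ E (n - d (↑v : T n) + 1) :=
      hAB _ _ (hbV_mem ↑v)
    rcases Nat.eq_zero_or_pos (d (↑v : T n)) with h0 | hpos
    · have hzero : A (bV ↑v) - B (bV ↑v) = 0 := by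
        have hh := hmono n (by rw [h0, Nat.sub_zero] at hmem; exact hmem)
        rwa [hEn, Submodule.mem_bot] at hh
      have : MA (↑u) (↑v) - MB (↑u) (↑v) = 0 := by rw [hsub, hzero]; simp
      exact sub_eq_zero.mp this
    · obtain ⟨j, hj⟩ : ∃ j, d (↑v : T n) = j + 1 := ⟨d (↑v : T n) - 1, by omega⟩
      have hjn : j + 1 ≤ n := hj ▸ hd_top ↑v
      have hmem' : A (bV ↑v) - B (bV ↑v) ∈ E (n - j) := by
        rw [hj] at hmem
        have heq : n - (j + 1) + 1 = n - j := by omega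
        rwa [heq] at hmem
      have hz : bV.repr (A (bV ↑v) - B (bV ↑v)) (↑u) = 0 :=
        hsupp j (by omega) _ hmem' ↑u (by rw [hdu, ← hdv, hj]; omega)
      have : MA (↑u) (↑v) - MB (↑u) (↑v) = 0 := by rw [hsub, hz]
      exact sub_eq_zero.mp this
  calc A.charpoly = MA.charpoly := (LinearMap.charpoly_toMatrix A bV).symm
    _ = ∏ a ∈ Finset.image d Finset.univ, (MA.toSquareBlock d a).charpoly := Matrix.BlockTriangular.charpoly MA hMA
    _ = ∏ a ∈ Finset.image d Finset.univ, (MB.toSquareBlock d a).charpoly :=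
        Finset.prod_congr rfl fun a _ => by rw [hblocks a]
    _ = MB.charpoly := (Matrix.BlockTriangular.charpoly MB hMB).symm
    _ = B.charpoly := LinearMap.charpoly_toMatrix B bV



/-- Let `g` be a finite-dimensional solvable real Lie algebra with involutive automorphism
`σ`, `m` its `(−1)`-eigenspace, and `k = [m,m]`.  If `k` is contained in a nilpotent ideal
(the nilradical), then for `X = X_k + X_m` with `X_k ∈ k`, `X_m ∈ m`, the characteristic
polynomial of `ad X` equals that of `ad X_m`; in particular `ad X` has a purely imaginary
nonzero eigenvalue only if `ad X_m` does. -/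
theorem charpoly_ad_eq_of_nilradical_component
    (g : Type*) [LieRing g] [LieAlgebra ℝ g] [Module.Finite ℝ g]
    [LieAlgebra.IsSolvable g]
    (σ : g →ₗ⁅ℝ⁆ g) (hinv : ∀ x, σ (σ x) = x)
    (k : Submodule ℝ g)
    (hk : k = Submodule.span ℝ {z | ∃ x y : g, σ x = -x ∧ σ y = -y ∧ z = ⁅x, y⁆})
    (N : LieIdeal ℝ g) (hN : LieRing.IsNilpotent N) (hkN : ∀ z ∈ k, z ∈ N)
    (X Xk Xm : g) (hXk : Xk ∈ k) (hXm : σ Xm = -Xm) (hX : X = Xk + Xm) :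
    (LieAlgebra.ad ℝ g X).charpoly = (LieAlgebra.ad ℝ g Xm).charpoly ∧
    (∀ t : ℝ, t ≠ 0 →
      (((LieAlgebra.ad ℝ g X).charpoly.map (algebraMap ℝ ℂ)).IsRoot (t * Complex.I) →
       ((LieAlgebra.ad ℝ g Xm).charpoly.map (algebraMap ℝ ℂ)).IsRoot (t * Complex.I))) := by
  classical
  obtain ⟨kk, hkk⟩ := (LieModule.isNilpotent_iff ℝ N N).mp hN
  have hXkN : Xk ∈ N := hkN Xk hXk
  -- the filtration by iterated brackets with N
  let D : ℕ → LieIdeal ℝ g := fun i => Nat.rec N (fun _ prev => ⁅N, prev⁆) i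
  have hD0 : D 0 = N := rfl
  have hDsucc : ∀ i, D (i + 1) = ⁅N, D i⁆ := fun _ => rfl
  -- D i is contained in the image of the lower central series of N
  have hDle : ∀ i, ∀ x ∈ D i, ∃ y : N, y ∈ LieModule.lowerCentralSeries ℝ N N i ∧ (y : g) = x := by
    intro i
    induction i with
    | zero =>
      intro x hx
      exact ⟨⟨x, hx⟩, LieSubmodule.mem_top _, rfl⟩
    | succ i ih =>
      intro x hx
      rw [hDsucc i, ← LieSubmodule.mem_toSubmodule,
        LieSubmodule.lieIdeal_oper_eq_linear_span'] at hx
      have hx' := hx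
      refine Submodule.span_induction ?_ ?_ ?_ ?_ hx'
      · rintro z ⟨a, ha, b, hb, rfl⟩
        obtain ⟨y', hy', rfl⟩ := ih b hb
        refine ⟨⁅(⟨a, ha⟩ : N), y'⁆, ?_, ?_⟩
        · rw [LieModule.lowerCentralSeries_succ]
          exact LieSubmodule.lie_mem_lie (LieSubmodule.mem_top _) hy'
        · rfl
      · exact ⟨0, Submodule.zero_mem _, rfl⟩
      · rintro a b _ _ ⟨y1, hy1, rfl⟩ ⟨y2, hy2, rfl⟩
        exact ⟨y1 + y2, add_mem hy1 hy2, rfl⟩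
      · rintro t a _ ⟨y1, hy1, rfl⟩
        exact ⟨t • y1, Submodule.smul_mem _ t hy1, rfl⟩
  have hDbot : ∀ x ∈ D kk, x = (0 : g) := by
    intro x hx
    obtain ⟨y, hy, rfl⟩ := hDle kk x hx
    rw [hkk, LieSubmodule.mem_bot] at hy
    rw [hy]; rfl
  -- the submodule filtration
  let E : ℕ → Submodule ℝ g := fun i => Nat.casesOn i ⊤ fun j => LieSubmodule.toSubmodule (D j)
  have hE0 : E 0 = ⊤ := rfl
  have hEsucc : ∀ i, E (i + 1) = LieSubmodule.toSubmodule (D i) := fun _ => rfl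
  have hEbot : E (kk + 1) = ⊥ := by
    rw [hEsucc]
    exact le_bot_iff.mp fun x hx => Submodule.mem_bot ℝ |>.mpr (hDbot x hx)
  have hmono : ∀ i, E (i + 1) ≤ E i := by
    intro i
    cases i with
    | zero => exact le_top
    | succ j =>
      intro x hx
      have hx' : x ∈ (⁅N, D j⁆ : LieIdeal ℝ g) := hx
      show x ∈ (D j : LieIdeal ℝ g)
      exact LieSubmodule.lie_le_right _ _ hx'
  set A := LieAlgebra.ad ℝ g X with hA'
  set B := LieAlgebra.ad ℝ g Xm with hB'
  have hAmem : ∀ i, ∀ x ∈ E i, A x ∈ E i := by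
    intro i
    cases i with
    | zero => intro x _; exact Submodule.mem_top
    | succ j =>
      intro x hx
      have hx' : x ∈ (D j : LieIdeal ℝ g) := hx
      have hax : A x = ⁅X, x⁆ := by rw [hA']; exact LieAlgebra.ad_apply ℝ g X x
      show A x ∈ (D j : LieIdeal ℝ g)
      rw [hax]
      exact (D j).lie_mem hx'
  have hBmem : ∀ i, ∀ x ∈ E i, B x ∈ E i := by
    intro i
    cases i with
    | zero => intro x _; exact Submodule.mem_top
    | succ j =>
      intro x hx
      have hx' : x ∈ (D j : LieIdeal ℝ g) := hx
      have hax : B x = ⁅Xm, x⁆ := by rw [hB']; exact LieAlgebra.ad_apply ℝ g Xm x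
      show B x ∈ (D j : LieIdeal ℝ g)
      rw [hax]
      exact (D j).lie_mem hx'
  have hdiff : ∀ x : g, A x - B x = ⁅Xk, x⁆ := by
    intro x
    rw [hA', hB', LieAlgebra.ad_apply, LieAlgebra.ad_apply, ← sub_lie, hX, add_sub_cancel_right]
  have hABmem : ∀ i, ∀ x ∈ E i, A x - B x ∈ E (i + 1) := by
    intro i x hx
    rw [hdiff]
    cases i with
    | zero =>
      show ⁅Xk, x⁆ ∈ (N : LieIdeal ℝ g)
      have h1 : ⁅x, Xk⁆ ∈ N := N.lie_mem hXkN
      have h2 : ⁅Xk, x⁆ = -⁅x, Xk⁆ := (lie_skew Xk x).symm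
      rw [h2]
      exact neg_mem h1
    | succ j =>
      have hx' : x ∈ (D j : LieIdeal ℝ g) := hx
      show ⁅Xk, x⁆ ∈ (⁅N, D j⁆ : LieIdeal ℝ g)
      exact LieSubmodule.lie_mem_lie hXkN hx'
  have hmain : A.charpoly = B.charpoly :=
    charpoly_eq_of_filtration A B (kk + 1) E hE0 hEbot hmono hAmem hBmem hABmem
  refine ⟨hmain, ?_⟩
  intro t _ hroot
  rwa [hmain] at hroot
end

section
/- Consider ℝ² with the symmetric space structure given by s_{(a,b)}(a',b') = (2a − a', 2cosh(a − a')·b − b'). Then every pair of points has a unique midpoint, i.e., for all p, q ∈ ℝ² there is a unique z ∈ ℝ² with s_z(p) = q. -/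
/-- The symmetry of the exponential solvable symmetric space `ℝ²`:
`s_{(a,b)}(a',b') = (2a − a', 2cosh(a − a')·b − b')`. -/
noncomputable def symCosh (z p : ℝ × ℝ) : ℝ × ℝ :=
  (2 * z.1 - p.1, 2 * Real.cosh (z.1 - p.1) * z.2 - p.2)

/-- In the symmetric space `ℝ²` with symmetries
`s_{(a,b)}(a',b') = (2a − a', 2cosh(a − a')·b − b')`, every pair of points has a unique
midpoint. -/
theorem cosh_space_unique_midpoint (p q : ℝ × ℝ) : ∃! z : ℝ × ℝ, symCosh z p = q := by
  have hc : Real.cosh ((p.1 + q.1) / 2 - p.1) ≠ 0 := ne_of_gt (Real.cosh_pos _)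
  refine ⟨((p.1 + q.1) / 2, (q.2 + p.2) / (2 * Real.cosh ((p.1 + q.1) / 2 - p.1))), ?_, ?_⟩
  · simp only [symCosh, Prod.ext_iff]
    constructor
    · ring
    · field_simp
      ring
  · rintro ⟨a, b⟩ h
    simp only [symCosh, Prod.ext_iff] at h
    obtain ⟨h1, h2⟩ := h
    have ha : a = (p.1 + q.1) / 2 := by linarith
    subst ha
    have hb : b = (q.2 + p.2) / (2 * Real.cosh ((p.1 + q.1) / 2 - p.1)) := by
      rw [eq_div_iff (by positivity : (2:ℝ) * Real.cosh ((p.1 + q.1) / 2 - p.1) ≠ 0)]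
      linarith
    exact Prod.ext rfl hb
end

section
/- Let m be a Lie triple system. On g := m ⊕ span{L_{X,Y} : X,Y ∈ m} (where L_{X,Y} = [X,Y,·] ∈ End(m)), the bracket defined by [X,Y] = L_{X,Y}, [L_{X,Y}, Z] = L_{X,Y}Z = −[Z, L_{X,Y}], and [L_{X,Y}, L_{U,V}] = L_{L_{X,Y}U, V} + L_{U, L_{X,Y}V} for X,Y,Z,U,V ∈ m, is a Lie bracket, making g a Lie algebra (the standard embedding of m). -/
attribute [local instance] LieRing.ofAssociativeRing

/-- Standard embedding of a Lie triple system `m`: on `g = m ⊕ [m,m]`, where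
`[m,m] = span{L_{X,Y} = [X,Y,·]} ⊆ End(m)`, the bracket determined by `[X,Y] = L_{X,Y}`,
`[L_{X,Y},Z] = L_{X,Y}Z = −[Z,L_{X,Y}]` and `[L_{X,Y},L_{U,V}] = L_{L_{X,Y}U,V} +
L_{U,L_{X,Y}V}` is a Lie bracket (bilinear, alternating, Jacobi). -/
theorem standard_embedding_is_lie_bracket
    (m : Type*) [AddCommGroup m] [Module ℝ m]
    (T : m →ₗ[ℝ] m →ₗ[ℝ] m →ₗ[ℝ] m)
    (lts1 : ∀ x y, T x x y = 0)
    (lts2 : ∀ x y z, T x y z + T y z x + T z x y = 0)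
    (lts3 : ∀ x y u v w,
      T x y (T u v w) = T (T x y u) v w + T u (T x y v) w + T u v (T x y w)) :
    ∃ b : (m × (Submodule.span ℝ {f : m →ₗ[ℝ] m | ∃ X Y, f = T X Y})) →
          (m × (Submodule.span ℝ {f : m →ₗ[ℝ] m | ∃ X Y, f = T X Y})) →
          (m × (Submodule.span ℝ {f : m →ₗ[ℝ] m | ∃ X Y, f = T X Y})),
      -- bilinearity
      (∀ p p' q, b (p + p') q = b p q + b p' q) ∧
      (∀ (c : ℝ) p q, b (c • p) q = c • b p q) ∧
      (∀ p q q', b p (q + q') = b p q + b p q') ∧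
      (∀ (c : ℝ) p q, b p (c • q) = c • b p q) ∧
      -- alternating (hence antisymmetric)
      (∀ p, b p p = 0) ∧
      -- Jacobi identity
      (∀ p q r, b (b p q) r + b (b q r) p + b (b r p) q = 0) ∧
      -- the defining values of the bracket on generators
      (∀ X Y : m, b (X, 0) (Y, 0) =
        (0, ⟨T X Y, Submodule.subset_span ⟨X, Y, rfl⟩⟩)) ∧
      (∀ X Y Z : m,
        b (0, ⟨T X Y, Submodule.subset_span ⟨X, Y, rfl⟩⟩) (Z, 0) = (T X Y Z, 0)) ∧
      (∀ X Y U V : m,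
        b (0, ⟨T X Y, Submodule.subset_span ⟨X, Y, rfl⟩⟩)
          (0, ⟨T U V, Submodule.subset_span ⟨U, V, rfl⟩⟩) =
        (0, ⟨T (T X Y U) V + T U (T X Y V),
             Submodule.add_mem _ (Submodule.subset_span ⟨T X Y U, V, rfl⟩)
               (Submodule.subset_span ⟨U, T X Y V, rfl⟩)⟩)) := by
  set S : Set (m →ₗ[ℝ] m) := {f | ∃ X Y, f = T X Y} with hSdef
  -- skew-symmetry in the first two arguments
  have skew : ∀ a b : m, T a b = - T b a := by
    intro a b
    ext c
    have h := lts1 (a + b) c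
    simp only [map_add, LinearMap.add_apply, lts1] at h
    simp only [zero_add, add_zero] at h
    simp only [LinearMap.neg_apply]
    rw [eq_neg_iff_add_eq_zero, add_comm]
    exact h
  -- key: commutator with a generator
  have key : ∀ f ∈ Submodule.span ℝ S, ∀ u v : m,
      ⁅f, T u v⁆ = T (f u) v + T u (f v) := by
    intro f hf
    induction hf using Submodule.span_induction with
    | mem g hg =>
      obtain ⟨X, Y, rfl⟩ := hg
      intro u v
      ext w
      simp only [Ring.lie_def, LinearMap.sub_apply, Module.End.mul_apply,
        LinearMap.add_apply, lts3 X Y u v w]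
      abel
    | zero => intro u v; simp
    | add f g hf hg ihf ihg =>
      intro u v
      simp only [add_lie, ihf u v, ihg u v, map_add, LinearMap.add_apply]
      abel
    | smul c f hf ihf =>
      intro u v
      simp only [smul_lie, ihf u v, map_smul, LinearMap.smul_apply, smul_add]
  -- closure of the span under commutators
  have clos : ∀ f ∈ Submodule.span ℝ S, ∀ g ∈ Submodule.span ℝ S,
      ⁅f, g⁆ ∈ Submodule.span ℝ S := by
    intro f hf g hg
    induction hg using Submodule.span_induction with
    | mem g hg =>
      obtain ⟨U, V, rfl⟩ := hg
      rw [key f hf U V]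
      exact Submodule.add_mem _ (Submodule.subset_span ⟨_, _, rfl⟩)
        (Submodule.subset_span ⟨_, _, rfl⟩)
    | zero => simp
    | add a b ha hb iha ihb => rw [lie_add]; exact Submodule.add_mem _ iha ihb
    | smul c a ha iha => rw [lie_smul]; exact Submodule.smul_mem _ _ iha
  refine ⟨fun p q => (p.2.1 q.1 - q.2.1 p.1,
    ⟨T p.1 q.1 + ⁅(p.2.1 : m →ₗ[ℝ] m), q.2.1⁆,
     Submodule.add_mem _ (Submodule.subset_span ⟨_, _, rfl⟩) (clos _ p.2.2 _ q.2.2)⟩),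
    ?_, ?_, ?_, ?_, ?_, ?_, ?_, ?_, ?_⟩
  · -- add left
    intro p p' q
    refine Prod.ext ?_ (Subtype.ext ?_) <;>
      simp only [Prod.fst_add, Prod.snd_add, Submodule.coe_add, map_add,
        LinearMap.add_apply, add_lie] <;> abel
  · -- smul left
    intro c p q
    refine Prod.ext ?_ (Subtype.ext ?_) <;>
      simp only [Prod.smul_fst, Prod.smul_snd, Submodule.coe_smul, map_smul,
        LinearMap.smul_apply, smul_lie, smul_sub, smul_add] 
  · -- add right
    intro p q q'
    refine Prod.ext ?_ (Subtype.ext ?_) <;>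
      simp only [Prod.fst_add, Prod.snd_add, Submodule.coe_add, map_add,
        LinearMap.add_apply, lie_add] <;> abel
  · -- smul right
    intro c p q
    refine Prod.ext ?_ (Subtype.ext ?_) <;>
      simp only [Prod.smul_fst, Prod.smul_snd, Submodule.coe_smul, map_smul,
        LinearMap.smul_apply, lie_smul, smul_sub, smul_add]
  · -- alternating
    intro p
    refine Prod.ext ?_ (Subtype.ext ?_)
    · simp
    · simp only [lie_self, add_zero, Prod.snd_zero, ZeroMemClass.coe_zero]
      ext w; simp [lts1]
  · -- Jacobi
    intro p q r
    obtain ⟨X, f⟩ := p; obtain ⟨Y, g⟩ := q; obtain ⟨Z, h⟩ := r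
    refine Prod.ext ?_ (Subtype.ext ?_)
    · simp only [Prod.fst_add, Prod.snd_add, Submodule.coe_add, Prod.fst_zero,
        Ring.lie_def, LinearMap.sub_apply, LinearMap.add_apply, Module.End.mul_apply,
        map_sub, map_add]
      have h2 : ((T Z) X) Y = -(((T X) Y) Z + ((T Y) Z) X) := by
        rw [eq_neg_iff_add_eq_zero, add_comm]; exact lts2 X Y Z
      rw [h2]; abel
    · simp only [Prod.snd_add, Submodule.coe_add, Prod.snd_zero, ZeroMemClass.coe_zero,
        map_sub, add_lie]
      have e1 : ⁅(T X Y : m →ₗ[ℝ] m), (h : m →ₗ[ℝ] m)⁆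
          = -(T ((h : m →ₗ[ℝ] m) X) Y + T X ((h : m →ₗ[ℝ] m) Y)) := by
        rw [← lie_skew, key _ h.2]
      have e2 : ⁅(T Y Z : m →ₗ[ℝ] m), (f : m →ₗ[ℝ] m)⁆
          = -(T ((f : m →ₗ[ℝ] m) Y) Z + T Y ((f : m →ₗ[ℝ] m) Z)) := by
        rw [← lie_skew, key _ f.2]
      have e3 : ⁅(T Z X : m →ₗ[ℝ] m), (g : m →ₗ[ℝ] m)⁆
          = -(T ((g : m →ₗ[ℝ] m) Z) X + T Z ((g : m →ₗ[ℝ] m) X)) := by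
        rw [← lie_skew, key _ g.2]
      rw [e1, e2, e3, skew X ((h : m →ₗ[ℝ] m) Y), skew Y ((f : m →ₗ[ℝ] m) Z),
        skew Z ((g : m →ₗ[ℝ] m) X)]
      simp only [Ring.lie_def, sub_mul, mul_sub, mul_assoc, LinearMap.sub_apply, map_sub]
      abel
  · intro X Y
    refine Prod.ext ?_ (Subtype.ext ?_) <;> simp
  · intro X Y Z
    refine Prod.ext ?_ (Subtype.ext ?_) <;> simp
  · intro X Y U V
    refine Prod.ext ?_ (Subtype.ext ?_) <;> simp [key (T X Y) (Submodule.subset_span ⟨X, Y, rfl⟩) U V]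
end
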